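/- Suppose functions f^ν : ℝ^m × ℝ^n → ℝ∪{±∞} epi-converge to f, where f is a Rockafellian for minimizing a function φ with nonempty domain, f has anchor ū, and f is strictly exact for ȳ. Let y^ν → ȳ, ε^ν ↓ 0, and (u^ν, x^ν) be ε^ν-minimizers of (u,x) ↦ f^ν(u,x) − ⟨y^ν, u⟩. Then every cluster point (û, x̂) of the sequence (u^ν, x^ν) satisfies û = ū and x̂ ∈ argmin φ. -/

import Mathlib

open Filter Topology RealInnerProductSpace

open scoped Classical

lemma my_liminf_subseq (u : ℕ → EReal) {σ : ℕ → ℕ} (hσ : StrictMono σ) :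
    Filter.liminf u Filter.atTop ≤ Filter.liminf (fun k => u (σ k)) Filter.atTop := by
  have h2 : Filter.liminf u (Filter.map σ Filter.atTop)
      = Filter.liminf (fun k => u (σ k)) Filter.atTop := by
    simp [Filter.liminf_eq, Filter.eventually_map]
  rw [← h2]
  exact Filter.liminf_le_liminf_of_le hσ.tendsto_atTop

lemma my_limsup_subseq (u : ℕ → EReal) {σ : ℕ → ℕ} (hσ : StrictMono σ) :
    Filter.limsup (fun k => u (σ k)) Filter.atTop ≤ Filter.limsup u Filter.atTop := by
  have h2 : Filter.limsup u (Filter.map σ Filter.atTop)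
      = Filter.limsup (fun k => u (σ k)) Filter.atTop := by
    simp [Filter.limsup_eq, Filter.eventually_map]
  rw [← h2]
  exact Filter.limsup_le_limsup_of_le hσ.tendsto_atTop

lemma my_merge_tendsto {α : Type*} [TopologicalSpace α] {σ : ℕ → ℕ} (hσ : StrictMono σ)
    {v : ℕ → α} {a : α} (h : Filter.Tendsto (fun k => v (σ k)) Filter.atTop (𝓝 a)) :
    Filter.Tendsto (fun ν => if ν ∈ Set.range σ then v ν else a) Filter.atTop (𝓝 a) := by
  rw [tendsto_atTop_nhds] at h ⊢
  intro U haU hU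
  obtain ⟨K, hK⟩ := h U haU hU
  refine ⟨σ K, fun ν hν => ?_⟩
  by_cases hmem : ν ∈ Set.range σ
  · obtain ⟨k, rfl⟩ := hmem
    rw [if_pos ⟨k, rfl⟩]
    exact hK k (hσ.le_iff_le.mp hν)
  · rw [if_neg hmem]; exact haU

lemma my_shuffle2 (A : EReal) (p q : ℝ) :
    A - (q : EReal) + (p : EReal) = A + ((p - q : ℝ) : EReal) := by
  rw [sub_eq_add_neg, add_assoc, ← EReal.coe_neg, ← EReal.coe_add]
  congr 1
  rw [EReal.coe_eq_coe_iff]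
  ring

lemma my_shuffle3 (A : EReal) (c d e : ℝ) :
    A - (d : EReal) + (e : EReal) + (c : EReal) = A + ((c - d + e : ℝ) : EReal) := by
  rw [sub_eq_add_neg, add_assoc, add_assoc, ← EReal.coe_neg, ← EReal.coe_add, ← EReal.coe_add]
  congr 1
  rw [EReal.coe_eq_coe_iff]
  ring


/-- Convergence under asymptotic strict exactness. If `f^ν` epi-converge to a
strictly exact Rockafellian `f` (anchor `ū`, multiplier `ȳ`) for minimizing `φ` (with nonempty
domain), `y^ν → ȳ`, `ε^ν ↓ 0`, and `(u^ν,x^ν)` are `ε^ν`-minimizers of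
`(u,x) ↦ f^ν(u,x) − ⟨y^ν,u⟩`, then every cluster point `(û,x̂)` has `û = ū` and
`x̂ ∈ argmin φ`. -/
theorem stmt4 {m n : ℕ}
    (φ : EuclideanSpace ℝ (Fin n) → EReal)
    (f : EuclideanSpace ℝ (Fin m) → EuclideanSpace ℝ (Fin n) → EReal)
    (fν : ℕ → EuclideanSpace ℝ (Fin m) → EuclideanSpace ℝ (Fin n) → EReal)
    (ub yb : EuclideanSpace ℝ (Fin m))
    (hdom : ∃ x, φ x ≠ ⊤)
    (hRock : ∀ x, f ub x = φ x)
    -- epi-convergence of `f^ν` to `f`: liminf condition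
    (hliminf : ∀ (u : EuclideanSpace ℝ (Fin m)) (x : EuclideanSpace ℝ (Fin n))
        (useq : ℕ → EuclideanSpace ℝ (Fin m)) (xseq : ℕ → EuclideanSpace ℝ (Fin n)),
        Tendsto useq atTop (𝓝 u) → Tendsto xseq atTop (𝓝 x) →
        f u x ≤ Filter.liminf (fun ν => fν ν (useq ν) (xseq ν)) atTop)
    -- epi-convergence of `f^ν` to `f`: limsup (recovery sequence) condition
    (hlimsup : ∀ (u : EuclideanSpace ℝ (Fin m)) (x : EuclideanSpace ℝ (Fin n)),
        ∃ (useq : ℕ → EuclideanSpace ℝ (Fin m)) (xseq : ℕ → EuclideanSpace ℝ (Fin n)),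
          Tendsto useq atTop (𝓝 u) ∧ Tendsto xseq atTop (𝓝 x) ∧
          Filter.limsup (fun ν => fν ν (useq ν) (xseq ν)) atTop ≤ f u x)
    -- strict exactness of `f` for `ȳ`
    (hexact : ∀ xs, (∀ x, φ xs ≤ φ x) →
        ∀ (u : EuclideanSpace ℝ (Fin m)) (x : EuclideanSpace ℝ (Fin n)),
          f ub xs - ((⟪yb, ub - ub⟫ : ℝ) : EReal) ≤ f u x - ((⟪yb, u - ub⟫ : ℝ) : EReal))
    (hstrict : ∀ (us : EuclideanSpace ℝ (Fin m)) (xs : EuclideanSpace ℝ (Fin n)),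
        (∀ (u : EuclideanSpace ℝ (Fin m)) (x : EuclideanSpace ℝ (Fin n)),
          f us xs - ((⟪yb, us - ub⟫ : ℝ) : EReal) ≤ f u x - ((⟪yb, u - ub⟫ : ℝ) : EReal)) →
        us = ub ∧ ∀ x, φ xs ≤ φ x)
    -- data of the approximating problems
    (yν : ℕ → EuclideanSpace ℝ (Fin m)) (hy : Tendsto yν atTop (𝓝 yb))
    (εν : ℕ → ℝ) (hεpos : ∀ ν, 0 ≤ εν ν) (hεanti : Antitone εν)
    (hε : Tendsto εν atTop (𝓝 0))
    (uν : ℕ → EuclideanSpace ℝ (Fin m)) (xν : ℕ → EuclideanSpace ℝ (Fin n))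
    -- `(u^ν, x^ν)` is an `ε^ν`-minimizer with finite value
    (hargmin : ∀ ν, fν ν (uν ν) (xν ν) - ((⟪yν ν, uν ν⟫ : ℝ) : EReal) ≠ ⊤ ∧
        fν ν (uν ν) (xν ν) - ((⟪yν ν, uν ν⟫ : ℝ) : EReal) ≠ ⊥ ∧
        fν ν (uν ν) (xν ν) - ((⟪yν ν, uν ν⟫ : ℝ) : EReal) ≤
          (⨅ p : EuclideanSpace ℝ (Fin m) × EuclideanSpace ℝ (Fin n),
            fν ν p.1 p.2 - ((⟪yν ν, p.1⟫ : ℝ) : EReal)) + ((εν ν : ℝ) : EReal)) :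
    -- every cluster point `(û, x̂)` of the sequence satisfies `û = ū` and `x̂ ∈ argmin φ`
    ∀ (uh : EuclideanSpace ℝ (Fin m)) (xh : EuclideanSpace ℝ (Fin n)),
      (∃ σ : ℕ → ℕ, StrictMono σ ∧ Tendsto (fun k => uν (σ k)) atTop (𝓝 uh) ∧
        Tendsto (fun k => xν (σ k)) atTop (𝓝 xh)) →
      uh = ub ∧ ∀ x, φ xh ≤ φ x := by
  rintro uh xh ⟨σ, hσ, huc, hxc⟩
  apply hstrict uh xh
  intro u x
  obtain ⟨useq, xseq, hu1, hx1, hls⟩ := hlimsup u x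
  set rl : ℝ := ⟪yb, uh⟫ - ⟪yb, u⟫ with hrl
  -- main estimate
  have hmain : f uh xh ≤ f u x + (rl : EReal) := by
    set ut : ℕ → EuclideanSpace ℝ (Fin m) :=
      fun ν => if ν ∈ Set.range σ then uν ν else uh with hut
    set xt : ℕ → EuclideanSpace ℝ (Fin n) :=
      fun ν => if ν ∈ Set.range σ then xν ν else xh with hxt
    set a : ℕ → EReal := fun k => fν (σ k) (uν (σ k)) (xν (σ k)) with ha
    set b : ℕ → EReal := fun k => fν (σ k) (useq (σ k)) (xseq (σ k)) with hb
    set r : ℕ → ℝ := fun k =>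
      ⟪yν (σ k), uν (σ k)⟫ - ⟪yν (σ k), useq (σ k)⟫ + εν (σ k) with hrdef
    -- Step A
    have hA : f uh xh ≤ liminf a atTop := by
      have h0 := hliminf uh xh ut xt (my_merge_tendsto hσ huc) (my_merge_tendsto hσ hxc)
      refine h0.trans ?_
      refine (my_liminf_subseq (fun ν => fν ν (ut ν) (xt ν)) hσ).trans_eq ?_
      congr 1
      funext k
      simp only [hut, hxt, ha, if_pos (Set.mem_range_self k)]
    -- Step B
    have hBpt : ∀ k, a k ≤ b k + ((r k : ℝ) : EReal) := by
      intro k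
      obtain ⟨hT, hB, hmin⟩ := hargmin (σ k)
      have h1 : fν (σ k) (uν (σ k)) (xν (σ k)) - ((⟪yν (σ k), uν (σ k)⟫ : ℝ) : EReal) ≤
          (b k - ((⟪yν (σ k), useq (σ k)⟫ : ℝ) : EReal)) + ((εν (σ k) : ℝ) : EReal) := by
        refine hmin.trans (add_le_add_left ?_ _)
        exact iInf_le _ (useq (σ k), xseq (σ k))
      have h2 : a k ≤ (b k - ((⟪yν (σ k), useq (σ k)⟫ : ℝ) : EReal)) + ((εν (σ k) : ℝ) : EReal)
          + ((⟪yν (σ k), uν (σ k)⟫ : ℝ) : EReal) :=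
        (EReal.sub_le_iff_le_add (Or.inl (EReal.coe_ne_bot _))
          (Or.inl (EReal.coe_ne_top _))).mp h1
      rw [my_shuffle3] at h2
      exact h2
    -- limit of r
    have hrt : Tendsto r atTop (𝓝 rl) := by
      have hyσ : Tendsto (fun k => yν (σ k)) atTop (𝓝 yb) := hy.comp hσ.tendsto_atTop
      have huσ : Tendsto (fun k => useq (σ k)) atTop (𝓝 u) := hu1.comp hσ.tendsto_atTop
      have hεσ : Tendsto (fun k => εν (σ k)) atTop (𝓝 0) := hε.comp hσ.tendsto_atTop
      have := ((hyσ.inner huc).sub (hyσ.inner huσ)).add hεσ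
      simpa using this
    have hliminfr : liminf (fun k => ((r k : ℝ) : EReal)) atTop = (rl : EReal) :=
      (EReal.tendsto_coe.mpr hrt).liminf_eq
    -- Step C
    have hC : liminf a atTop ≤ f u x + (rl : EReal) := by
      have h3 : liminf a atTop ≤ liminf (fun k => b k + ((r k : ℝ) : EReal)) atTop :=
        liminf_le_liminf (Eventually.of_forall hBpt)
      have h4 : liminf (fun k => b k + ((r k : ℝ) : EReal)) atTop ≤
          limsup b atTop + liminf (fun k => ((r k : ℝ) : EReal)) atTop :=
        EReal.liminf_add_le
          (Or.inr (by rw [hliminfr]; exact EReal.coe_ne_top _))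
          (Or.inr (by rw [hliminfr]; exact EReal.coe_ne_bot _))
      have h5 : limsup b atTop ≤ f u x :=
        (my_limsup_subseq (fun ν => fν ν (useq ν) (xseq ν)) hσ).trans hls
      calc liminf a atTop ≤ limsup b atTop + liminf (fun k => ((r k : ℝ) : EReal)) atTop :=
            h3.trans h4
        _ = limsup b atTop + (rl : EReal) := by rw [hliminfr]
        _ ≤ f u x + (rl : EReal) := add_le_add_left h5 _
    exact hA.trans hC
  -- conclude
  rw [EReal.sub_le_iff_le_add (Or.inl (EReal.coe_ne_bot _)) (Or.inl (EReal.coe_ne_top _))]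
  rw [my_shuffle2]
  refine hmain.trans_eq ?_
  congr 2
  simp [inner_sub_right, hrl]
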